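/- arXiv:2204.05466 — 2 statements merged into one kernel-verified Lean document; each statement's English description precedes it below -/
import Mathlib

section
/- Let π and π' be two product policies (each π_i, π_i' a distribution on 𝒜), and for each agent i define the interleaved marginalized utility r̃_i(a) = Σ_{a_{-i}∈𝒜^{N−1}} u_i(a, a_{-i}) · ∏_{j<i} π_j(a_j) · ∏_{k>i} π_k'(a_k). Then Σ_{i=1}^N |⟨r̃_i − r_i^π, π_i' − π_i⟩| ≤ √N · J(π', π), where ⟨f, μ⟩ = Σ_{a∈𝒜} f(a) μ(a). -/
open Finset

noncomputable section

/-- A probability distribution on a finite action set. -/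
def IsDist {A : Type*} [Fintype A] (p : A → ℝ) : Prop :=
  (∀ a, 0 ≤ p a) ∧ ∑ a, p a = 1

/-- Shannon entropy of a distribution. -/
def entropy {A : Type*} [Fintype A] (p : A → ℝ) : ℝ :=
  -∑ a, p a * Real.log (p a)

/-- Kullback-Leibler divergence on a finite set. -/
def KLdiv {A : Type*} [Fintype A] (p q : A → ℝ) : ℝ :=
  ∑ a, p a * (Real.log (p a) - Real.log (q a))

/-- Jeffrey divergence: the symmetrized KL divergence. -/
def Jdiv {A : Type*} [Fintype A] (p q : A → ℝ) : ℝ :=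
  KLdiv p q + KLdiv q p

/-- Joint product distribution induced by a product policy. -/
def jointPmf {N : ℕ} {A : Type*} [Fintype A] (π : Fin N → A → ℝ) :
    (Fin N → A) → ℝ :=
  fun a => ∏ i, π i (a i)

/-- Expectation of `f` under the product policy `π`. -/
def expVal {N : ℕ} {A : Type*} [Fintype A] (π : Fin N → A → ℝ)
    (f : (Fin N → A) → ℝ) : ℝ :=
  ∑ a, jointPmf π a * f a

/-- Point mass at action `a`. -/
def pmfOf {A : Type*} [DecidableEq A] (a : A) : A → ℝ :=
  fun b => if b = a then 1 else 0

/-- Marginalized utility `r_i^π(a) = E_{a_{-i} ∼ π_{-i}}[u_i(a, a_{-i})]`. -/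
def margU {N : ℕ} {A : Type*} [Fintype A] [DecidableEq A]
    (u : Fin N → (Fin N → A) → ℝ) (π : Fin N → A → ℝ) (i : Fin N) (a : A) : ℝ :=
  expVal (Function.update π i (pmfOf a)) (u i)

/-- Entropy-regularized utility `u_{i,τ}(π) = u_i(π) + τ H(π_i)`. -/
def uReg {N : ℕ} {A : Type*} [Fintype A] (u : Fin N → (Fin N → A) → ℝ) (τ : ℝ)
    (i : Fin N) (π : Fin N → A → ℝ) : ℝ :=
  expVal π (u i) + τ * entropy (π i)

/-- `QRE-gap_τ(π)`. -/
def QREgap {N : ℕ} {A : Type*} [Fintype A] [DecidableEq A]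
    (u : Fin N → (Fin N → A) → ℝ) (τ : ℝ) (π : Fin N → A → ℝ) : ℝ :=
  sSup {x | ∃ (i : Fin N) (p : A → ℝ), IsDist p ∧
    x = uReg u τ i (Function.update π i p) - uReg u τ i π}

/-- `NE-gap(π)`. -/
def NEgap {N : ℕ} {A : Type*} [Fintype A] [DecidableEq A]
    (u : Fin N → (Fin N → A) → ℝ) (π : Fin N → A → ℝ) : ℝ :=
  sSup {x | ∃ (i : Fin N) (p : A → ℝ), IsDist p ∧
    x = expVal (Function.update π i p) (u i) - expVal π (u i)}

/-- Entropy-regularized potential `Φ_τ(π) = Φ(π) + τ ∑_i H(π_i)`. -/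
def regPot {N : ℕ} {A : Type*} [Fintype A] (Φ : (Fin N → A) → ℝ) (τ : ℝ)
    (π : Fin N → A → ℝ) : ℝ :=
  expVal π Φ + τ * ∑ i, entropy (π i)

/-- `Φ` is a potential function for the game with utilities `u`. -/
def IsPotential {N : ℕ} {A : Type*} [Fintype A] [DecidableEq A]
    (u : Fin N → (Fin N → A) → ℝ) (Φ : (Fin N → A) → ℝ) : Prop :=
  ∀ (i : Fin N) (a : Fin N → A) (a' : A),
    u i a - u i (Function.update a i a') = Φ a - Φ (Function.update a i a')

/-- The independent entropy-regularized NPG update rule. -/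
def NPGstep {N : ℕ} {A : Type*} [Fintype A] [DecidableEq A]
    (u : Fin N → (Fin N → A) → ℝ) (τ η : ℝ) (π : ℕ → Fin N → A → ℝ) : Prop :=
  ∀ t i a, π (t+1) i a =
    π t i a ^ (1 - η * τ) * Real.exp (η * margU u (π t) i a) /
      ∑ a', π t i a' ^ (1 - η * τ) * Real.exp (η * margU u (π t) i a')

/-- Best-response policy `π_i^⋆(a) ∝ exp(r_i^π(a)/τ)`. -/
def bestResp {N : ℕ} {A : Type*} [Fintype A] [DecidableEq A]
    (u : Fin N → (Fin N → A) → ℝ) (τ : ℝ) (π : Fin N → A → ℝ) (i : Fin N) :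
    A → ℝ :=
  fun a => Real.exp (margU u π i a / τ) / ∑ a', Real.exp (margU u π i a' / τ)

lemma sq_le_jpoint {p q : ℝ} (hp : 0 < p) (hq : 0 < q) :
    (p - q) ^ 2 ≤ (p + q) * ((p - q) * (Real.log p - Real.log q)) := by
  have key : ∀ p q : ℝ, 0 < p → 0 < q → q ≤ p →
      (p - q) ^ 2 ≤ (p + q) * ((p - q) * (Real.log p - Real.log q)) := by
    intro p q hp hq hle
    have h1 : 0 ≤ p - q := by linarith
    have hlog : (p - q) / p ≤ Real.log p - Real.log q := by
      have h := Real.log_le_sub_one_of_pos (div_pos hq hp)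
      rw [Real.log_div hq.ne' hp.ne'] at h
      have hd : q / p - 1 = (q - p) / p := by field_simp
      rw [hd] at h
      have : (p - q) / p = -((q - p) / p) := by ring
      linarith
    have h2 : (p - q) * ((p - q) / p) ≤ (p - q) * (Real.log p - Real.log q) :=
      mul_le_mul_of_nonneg_left hlog h1
    have h3 : (p - q) * ((p - q) / p) = (p - q) ^ 2 / p := by ring
    rw [h3] at h2
    rw [div_le_iff₀ hp] at h2
    have h4 : 0 ≤ (p - q) * (Real.log p - Real.log q) := by
      nlinarith [sq_nonneg (p - q)]
    calc (p - q) ^ 2 ≤ (p - q) * (Real.log p - Real.log q) * p := h2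
      _ ≤ (p - q) * (Real.log p - Real.log q) * (p + q) := by nlinarith
      _ = (p + q) * ((p - q) * (Real.log p - Real.log q)) := by ring
  rcases le_total q p with h | h
  · exact key p q hp hq h
  · calc (p - q) ^ 2 = (q - p) ^ 2 := by ring
      _ ≤ (q + p) * ((q - p) * (Real.log q - Real.log p)) := key q p hq hp h
      _ = (p + q) * ((p - q) * (Real.log p - Real.log q)) := by ring

lemma jpoint_nonneg {p q : ℝ} (hp : 0 < p) (hq : 0 < q) :
    0 ≤ (p - q) * (Real.log p - Real.log q) := by
  nlinarith [sq_le_jpoint hp hq, sq_nonneg (p - q)]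

lemma Jdiv_eq {A : Type*} [Fintype A] (p q : A → ℝ) :
    Jdiv p q = ∑ a, (p a - q a) * (Real.log (p a) - Real.log (q a)) := by
  unfold Jdiv KLdiv
  rw [← Finset.sum_add_distrib]
  exact Finset.sum_congr rfl fun a _ => by ring

lemma sum_prod_pi {N : ℕ} {A : Type*} [Fintype A] [DecidableEq A] (g : Fin N → A → ℝ) :
    ∑ b : Fin N → A, ∏ j, g j (b j) = ∏ j, ∑ x, g j x := by
  rw [Finset.prod_univ_sum, Fintype.piFinset_univ]

lemma sum_prod_single {N : ℕ} {A : Type*} [Fintype A] [DecidableEq A] (g : Fin N → A → ℝ)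
    (j : Fin N) (ℓ : A → ℝ) (hg : ∀ k, k ≠ j → ∑ x, g k x = 1) :
    ∑ b : Fin N → A, (∏ k, g k (b k)) * ℓ (b j) = ∑ x, g j x * ℓ x := by
  classical
  set G : Fin N → A → ℝ := fun k x => if k = j then g k x * ℓ x else g k x with hG
  have h1 : ∀ b : Fin N → A, (∏ k, g k (b k)) * ℓ (b j) = ∏ k, G k (b k) := by
    intro b
    rw [← Finset.mul_prod_erase univ (fun k => G k (b k)) (mem_univ j),
        ← Finset.mul_prod_erase univ (fun k => g k (b k)) (mem_univ j)]
    have e1 : ∏ k ∈ univ.erase j, G k (b k) = ∏ k ∈ univ.erase j, g k (b k) :=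
      Finset.prod_congr rfl (fun k hk => by simp [hG, (Finset.mem_erase.mp hk).1])
    rw [e1]
    simp [hG]
    ring
  calc ∑ b : Fin N → A, (∏ k, g k (b k)) * ℓ (b j)
      = ∑ b : Fin N → A, ∏ k, G k (b k) := Finset.sum_congr rfl (fun b _ => h1 b)
    _ = ∏ k, ∑ x, G k x := sum_prod_pi G
    _ = (∑ x, G j x) * ∏ k ∈ univ.erase j, ∑ x, G k x :=
        (Finset.mul_prod_erase univ _ (mem_univ j)).symm
    _ = ∑ x, g j x * ℓ x := by
        rw [Finset.prod_congr rfl (fun k hk => ?_), Finset.prod_const_one, mul_one]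
        · apply Finset.sum_congr rfl; intro x _; simp [hG]
        · simp [hG, (Finset.mem_erase.mp hk).1, hg k (Finset.mem_erase.mp hk).1]

lemma weighted_pinsker {B : Type*} [Fintype B] {w t t' : B → ℝ}
    (hw : ∀ b, 0 ≤ w b) (ht : ∀ b, 0 < t b) (ht' : ∀ b, 0 < t' b)
    (h1 : ∑ b, w b * t b = 1) (h2 : ∑ b, w b * t' b = 1) :
    (∑ b, w b * |t' b - t b|) ^ 2 ≤
      2 * ∑ b, w b * ((t' b - t b) * (Real.log (t' b) - Real.log (t b))) := by
  set f : B → ℝ := fun b => Real.sqrt (w b * ((t' b - t b) ^ 2 / (t' b + t b))) with hf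
  set g : B → ℝ := fun b => Real.sqrt (w b * (t' b + t b)) with hg
  have hsum : ∀ b, 0 < t' b + t b := fun b => by have := ht b; have := ht' b; linarith
  have hfg : ∀ b, f b * g b = w b * |t' b - t b| := by
    intro b
    rw [hf, hg, ← Real.sqrt_mul (mul_nonneg (hw b) (div_nonneg (sq_nonneg _) (hsum b).le))]
    have : w b * ((t' b - t b) ^ 2 / (t' b + t b)) * (w b * (t' b + t b))
        = (w b * |t' b - t b|) ^ 2 := by
      rw [mul_pow, sq_abs]
      field_simp [(hsum b).ne']
    rw [this, Real.sqrt_sq (mul_nonneg (hw b) (abs_nonneg _))]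
  have hCS := Finset.sum_mul_sq_le_sq_mul_sq univ f g
  have hfsq : ∀ b, f b ^ 2 = w b * ((t' b - t b) ^ 2 / (t' b + t b)) := fun b =>
    Real.sq_sqrt (mul_nonneg (hw b) (div_nonneg (sq_nonneg _) (hsum b).le))
  have hgsq : ∀ b, g b ^ 2 = w b * (t' b + t b) := fun b =>
    Real.sq_sqrt (mul_nonneg (hw b) (hsum b).le)
  have hg2 : ∑ b, g b ^ 2 = 2 := by
    calc ∑ b, g b ^ 2 = ∑ b, (w b * t' b + w b * t b) := by
          apply Finset.sum_congr rfl; intro b _; rw [hgsq]; ring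
      _ = 2 := by rw [Finset.sum_add_distrib, h1, h2]; norm_num
  have hf2 : ∑ b, f b ^ 2 ≤
      ∑ b, w b * ((t' b - t b) * (Real.log (t' b) - Real.log (t b))) := by
    apply Finset.sum_le_sum
    intro b _
    rw [hfsq]
    apply mul_le_mul_of_nonneg_left _ (hw b)
    rw [div_le_iff₀ (hsum b)]
    calc (t' b - t b) ^ 2 ≤ (t' b + t b) *
          ((t' b - t b) * (Real.log (t' b) - Real.log (t b))) := sq_le_jpoint (ht' b) (ht b)
      _ = (t' b - t b) * (Real.log (t' b) - Real.log (t b)) * (t' b + t b) := by ring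
  calc (∑ b, w b * |t' b - t b|) ^ 2 = (∑ b, f b * g b) ^ 2 := by
        rw [Finset.sum_congr rfl fun b _ => (hfg b).symm]
    _ ≤ (∑ b, f b ^ 2) * ∑ b, g b ^ 2 := hCS
    _ = (∑ b, f b ^ 2) * 2 := by rw [hg2]
    _ ≤ (∑ b, w b * ((t' b - t b) * (Real.log (t' b) - Real.log (t b)))) * 2 := by
        apply mul_le_mul_of_nonneg_right hf2; norm_num
    _ = 2 * ∑ b, w b * ((t' b - t b) * (Real.log (t' b) - Real.log (t b))) := by ring

lemma KLdiv_jointPmf {N : ℕ} {A : Type*} [Fintype A] [DecidableEq A]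
    (p q : Fin N → A → ℝ) (hp : ∀ j a, 0 < p j a) (hq : ∀ j a, 0 < q j a)
    (hps : ∀ j, ∑ a, p j a = 1) :
    KLdiv (jointPmf p) (jointPmf q) = ∑ j, KLdiv (p j) (q j) := by
  unfold KLdiv jointPmf
  have hlog : ∀ b : Fin N → A,
      Real.log (∏ j, p j (b j)) - Real.log (∏ j, q j (b j))
        = ∑ j, (Real.log (p j (b j)) - Real.log (q j (b j))) := by
    intro b
    rw [Real.log_prod (fun j _ => (hp j (b j)).ne'),
        Real.log_prod (fun j _ => (hq j (b j)).ne'), Finset.sum_sub_distrib]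
  calc ∑ b : Fin N → A, (∏ j, p j (b j)) *
        (Real.log (∏ j, p j (b j)) - Real.log (∏ j, q j (b j)))
      = ∑ b : Fin N → A, ∑ j, (∏ k, p k (b k)) *
          (Real.log (p j (b j)) - Real.log (q j (b j))) := by
        apply Finset.sum_congr rfl; intro b _; rw [hlog, Finset.mul_sum]
    _ = ∑ j, ∑ b : Fin N → A, (∏ k, p k (b k)) *
          (Real.log (p j (b j)) - Real.log (q j (b j))) := Finset.sum_comm
    _ = ∑ j, ∑ x, p j x * (Real.log (p j x) - Real.log (q j x)) := by
        apply Finset.sum_congr rfl; intro j _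
        exact sum_prod_single p j (fun x => Real.log (p j x) - Real.log (q j x)) (fun k _ => hps k)

lemma pmfOf_nonneg {A : Type*} [DecidableEq A] (a y : A) : 0 ≤ pmfOf a y := by
  unfold pmfOf; split <;> norm_num

lemma pmfOf_sum {A : Type*} [Fintype A] [DecidableEq A] (a : A) : ∑ y, pmfOf a y = 1 := by
  unfold pmfOf
  rw [Finset.sum_ite_eq' univ a fun _ => (1 : ℝ)]
  simp

/-- Bound on the cross terms involving the interleaved marginalized utilities. -/
theorem interleaved_cross_term_bound
    {N : ℕ} (hN : 0 < N) {A : Type*} [Fintype A] [DecidableEq A] [Nonempty A]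
    (u : Fin N → (Fin N → A) → ℝ) (hu : ∀ i a, 0 ≤ u i a ∧ u i a ≤ 1)
    (π π' : Fin N → A → ℝ)
    (hdist : ∀ i, IsDist (π i)) (hdist' : ∀ i, IsDist (π' i))
    (hpos : ∀ i a, 0 < π i a) (hpos' : ∀ i a, 0 < π' i a) :
    ∑ i : Fin N,
        |∑ a : A,
          (expVal (fun j => if j = i then pmfOf a else if j < i then π j else π' j)
              (u i) - margU u π i a) * (π' i a - π i a)| ≤
      Real.sqrt N * Jdiv (jointPmf π') (jointPmf π) := by
  classical
  set J := Jdiv (jointPmf π') (jointPmf π) with hJdef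
  have hJj_nonneg : ∀ j, 0 ≤ Jdiv (π' j) (π j) := by
    intro j
    rw [Jdiv_eq]
    exact Finset.sum_nonneg fun a _ => jpoint_nonneg (hpos' j a) (hpos j a)
  have hJdecomp : J = ∑ j, Jdiv (π' j) (π j) := by
    rw [hJdef]
    unfold Jdiv
    rw [KLdiv_jointPmf π' π (fun j a => hpos' j a) (fun j a => hpos j a)
          (fun j => (hdist' j).2),
        KLdiv_jointPmf π π' (fun j a => hpos j a) (fun j a => hpos' j a)
          (fun j => (hdist j).2),
        ← Finset.sum_add_distrib]
  have hJ0 : 0 ≤ J := by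
    rw [hJdecomp]; exact Finset.sum_nonneg fun j _ => hJj_nonneg j
  set x : Fin N → ℝ := fun j => ∑ a, |π' j a - π j a| with hx
  have hxnn : ∀ j, 0 ≤ x j := fun j => Finset.sum_nonneg fun a _ => abs_nonneg _
  have hxsq : ∀ j, x j ^ 2 ≤ 2 * Jdiv (π' j) (π j) := by
    intro j
    have h := weighted_pinsker (w := fun _ : A => 1) (t := π j) (t' := π' j)
      (fun _ => zero_le_one) (hpos j) (hpos' j)
      (by simpa using (hdist j).2) (by simpa using (hdist' j).2)
    simp only [one_mul] at h
    rw [Jdiv_eq]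
    exact h
  -- per-agent bound
  have key : ∀ i : Fin N,
      |∑ a : A,
          (expVal (fun j => if j = i then pmfOf a else if j < i then π j else π' j)
              (u i) - margU u π i a) * (π' i a - π i a)| ≤
        Real.sqrt (2 * J) / 2 * x i := by
    intro i
    have hdiff : ∀ a : A,
        |expVal (fun j => if j = i then pmfOf a else if j < i then π j else π' j)
            (u i) - margU u π i a| ≤ Real.sqrt (2 * J) / 2 := by
      intro a
      set ρ : Fin N → A → ℝ := Function.update π i (pmfOf a) with hρ
      set σ : Fin N → A → ℝ :=
        fun j => if j = i then pmfOf a else if j < i then π j else π' j with hσ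
      have hρnn : ∀ j y, 0 ≤ ρ j y := by
        intro j y
        by_cases hj : j = i
        · subst hj; rw [hρ, Function.update_self]; exact pmfOf_nonneg a y
        · rw [hρ, Function.update_of_ne hj]; exact (hpos j y).le
      have hρsum : ∀ j, ∑ y, ρ j y = 1 := by
        intro j
        by_cases hj : j = i
        · subst hj; rw [hρ, Function.update_self]; exact pmfOf_sum a
        · rw [hρ, Function.update_of_ne hj]; exact (hdist j).2
      have hσρ : ∀ j, ¬ i < j → σ j = ρ j := by
        intro j hj
        by_cases h : j = i
        · subst h; rw [hσ, hρ]; simp [Function.update_self]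
        · have hji : j < i := lt_of_le_of_ne (not_lt.mp hj) h
          rw [hσ, hρ, Function.update_of_ne h]; simp [h, hji]
      have hσπ' : ∀ j, i < j → σ j = π' j := by
        intro j hj
        rw [hσ]; simp [ne_of_gt hj, lt_asymm hj]
      have hρπ : ∀ j, i < j → ρ j = π j := fun j hj =>
        Function.update_of_ne (ne_of_gt hj) _ _
      have hσsum : ∀ j, ∑ y, σ j y = 1 := by
        intro j
        by_cases hj : i < j
        · rw [hσπ' j hj]; exact (hdist' j).2
        · rw [hσρ j hj]; exact hρsum j
      set tP : (Fin N → A) → ℝ := fun b => ∏ j ∈ univ.filter (fun j => i < j), π j (b j)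
        with htP
      set tP' : (Fin N → A) → ℝ := fun b => ∏ j ∈ univ.filter (fun j => i < j), π' j (b j)
        with htP'
      set wH : (Fin N → A) → ℝ :=
        fun b => ∏ j ∈ univ.filter (fun j => ¬ i < j), ρ j (b j) with hwH
      have hfactσ : ∀ b, jointPmf σ b = tP' b * wH b := by
        intro b
        show ∏ j, σ j (b j) = tP' b * wH b
        rw [← Finset.prod_filter_mul_prod_filter_not univ (fun j => i < j)
              (fun j => σ j (b j))]
        congr 1
        · exact Finset.prod_congr rfl fun j hj => by
            rw [hσπ' j (Finset.mem_filter.mp hj).2]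
        · exact Finset.prod_congr rfl fun j hj => by
            rw [hσρ j (Finset.mem_filter.mp hj).2]
      have hfactρ : ∀ b, jointPmf ρ b = tP b * wH b := by
        intro b
        show ∏ j, ρ j (b j) = tP b * wH b
        rw [← Finset.prod_filter_mul_prod_filter_not univ (fun j => i < j)
              (fun j => ρ j (b j))]
        congr 1
        exact Finset.prod_congr rfl fun j hj => by
          rw [hρπ j (Finset.mem_filter.mp hj).2]
      have hw_nn : ∀ b, 0 ≤ wH b := fun b =>
        Finset.prod_nonneg fun j _ => hρnn j (b j)
      have ht_pos : ∀ b, 0 < tP b := fun b =>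
        Finset.prod_pos fun j _ => hpos j (b j)
      have ht'_pos : ∀ b, 0 < tP' b := fun b =>
        Finset.prod_pos fun j _ => hpos' j (b j)
      have hsumσ : ∑ b : Fin N → A, jointPmf σ b = 1 := by
        show ∑ b : Fin N → A, ∏ j, σ j (b j) = 1
        rw [sum_prod_pi]
        exact Finset.prod_eq_one fun j _ => hσsum j
      have hsumρ : ∑ b : Fin N → A, jointPmf ρ b = 1 := by
        show ∑ b : Fin N → A, ∏ j, ρ j (b j) = 1
        rw [sum_prod_pi]
        exact Finset.prod_eq_one fun j _ => hρsum j
      have hsum1 : ∑ b : Fin N → A, wH b * tP b = 1 := by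
        rw [← hsumρ]
        exact Finset.sum_congr rfl fun b _ => by rw [hfactρ b]; ring
      have hsum2 : ∑ b : Fin N → A, wH b * tP' b = 1 := by
        rw [← hsumσ]
        exact Finset.sum_congr rfl fun b _ => by rw [hfactσ b]; ring
      -- cross term equals sum of coordinate Jeffreys over j > i
      have hcross : ∑ b : Fin N → A,
          wH b * ((tP' b - tP b) * (Real.log (tP' b) - Real.log (tP b)))
          = ∑ j ∈ univ.filter (fun j => i < j), Jdiv (π' j) (π j) := by
        have hlog : ∀ b : Fin N → A, Real.log (tP' b) - Real.log (tP b)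
            = ∑ j ∈ univ.filter (fun j => i < j),
                (Real.log (π' j (b j)) - Real.log (π j (b j))) := by
          intro b
          rw [htP, htP', Real.log_prod (fun j _ => (hpos' j (b j)).ne'),
              Real.log_prod (fun j _ => (hpos j (b j)).ne'),
              Finset.sum_sub_distrib]
        calc ∑ b : Fin N → A,
              wH b * ((tP' b - tP b) * (Real.log (tP' b) - Real.log (tP b)))
            = ∑ b : Fin N → A, ∑ j ∈ univ.filter (fun j => i < j),
                (jointPmf σ b * (Real.log (π' j (b j)) - Real.log (π j (b j)))
                  - jointPmf ρ b * (Real.log (π' j (b j)) - Real.log (π j (b j)))) := by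
              apply Finset.sum_congr rfl; intro b _
              rw [hlog b, hfactσ b, hfactρ b, Finset.mul_sum, Finset.mul_sum]
              apply Finset.sum_congr rfl; intro j _
              ring
          _ = ∑ j ∈ univ.filter (fun j => i < j),
                (∑ b : Fin N → A,
                  jointPmf σ b * (Real.log (π' j (b j)) - Real.log (π j (b j)))
                 - ∑ b : Fin N → A,
                  jointPmf ρ b * (Real.log (π' j (b j)) - Real.log (π j (b j)))) := by
              rw [Finset.sum_comm]
              exact Finset.sum_congr rfl fun j _ => by rw [Finset.sum_sub_distrib]
          _ = ∑ j ∈ univ.filter (fun j => i < j), Jdiv (π' j) (π j) := by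
              apply Finset.sum_congr rfl; intro j hj
              have hij : i < j := (Finset.mem_filter.mp hj).2
              have e1 : ∑ b : Fin N → A,
                  jointPmf σ b * (Real.log (π' j (b j)) - Real.log (π j (b j)))
                  = ∑ y, π' j y * (Real.log (π' j y) - Real.log (π j y)) := by
                calc ∑ b : Fin N → A,
                    jointPmf σ b * (Real.log (π' j (b j)) - Real.log (π j (b j)))
                    = ∑ y, σ j y * (Real.log (π' j y) - Real.log (π j y)) :=
                      by exact sum_prod_single σ j (fun y => Real.log (π' j y) - Real.log (π j y)) (fun k _ => hσsum k)
                  _ = ∑ y, π' j y * (Real.log (π' j y) - Real.log (π j y)) := by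
                      rw [hσπ' j hij]
              have e2 : ∑ b : Fin N → A,
                  jointPmf ρ b * (Real.log (π' j (b j)) - Real.log (π j (b j)))
                  = ∑ y, π j y * (Real.log (π' j y) - Real.log (π j y)) := by
                calc ∑ b : Fin N → A,
                    jointPmf ρ b * (Real.log (π' j (b j)) - Real.log (π j (b j)))
                    = ∑ y, ρ j y * (Real.log (π' j y) - Real.log (π j y)) :=
                      by exact sum_prod_single ρ j (fun y => Real.log (π' j y) - Real.log (π j y)) (fun k _ => hρsum k)
                  _ = ∑ y, π j y * (Real.log (π' j y) - Real.log (π j y)) := by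
                      rw [hρπ j hij]
              rw [e1, e2]
              unfold Jdiv KLdiv
              rw [← Finset.sum_sub_distrib, ← Finset.sum_add_distrib]
              exact Finset.sum_congr rfl fun y _ => by ring
      have hcross_le : ∑ b : Fin N → A,
          wH b * ((tP' b - tP b) * (Real.log (tP' b) - Real.log (tP b))) ≤ J := by
        rw [hcross, hJdecomp]
        exact Finset.sum_le_sum_of_subset_of_nonneg (Finset.filter_subset _ _)
          (fun j _ _ => hJj_nonneg j)
      have hM : ∑ b : Fin N → A, wH b * |tP' b - tP b| ≤ Real.sqrt (2 * J) := by
        have hp := weighted_pinsker hw_nn ht_pos ht'_pos hsum1 hsum2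
        have hMsq : (∑ b : Fin N → A, wH b * |tP' b - tP b|) ^ 2 ≤ 2 * J := by
          calc (∑ b : Fin N → A, wH b * |tP' b - tP b|) ^ 2
              ≤ 2 * ∑ b : Fin N → A,
                  wH b * ((tP' b - tP b) * (Real.log (tP' b) - Real.log (tP b))) := hp
            _ ≤ 2 * J := by linarith
        have hMnn : 0 ≤ ∑ b : Fin N → A, wH b * |tP' b - tP b| :=
          Finset.sum_nonneg fun b _ => mul_nonneg (hw_nn b) (abs_nonneg _)
        calc ∑ b : Fin N → A, wH b * |tP' b - tP b|
            = Real.sqrt ((∑ b : Fin N → A, wH b * |tP' b - tP b|) ^ 2) :=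
              (Real.sqrt_sq hMnn).symm
          _ ≤ Real.sqrt (2 * J) := Real.sqrt_le_sqrt hMsq
      -- centering
      have hΔ : expVal σ (u i) - margU u π i a
          = ∑ b : Fin N → A, (jointPmf σ b - jointPmf ρ b) * (u i b - 1/2) := by
        have h0 : ∑ b : Fin N → A, (jointPmf σ b - jointPmf ρ b) = 0 := by
          rw [Finset.sum_sub_distrib, hsumσ, hsumρ]; ring
        have h1 : expVal σ (u i) - margU u π i a
            = ∑ b : Fin N → A, (jointPmf σ b - jointPmf ρ b) * u i b := by
          show (∑ b : Fin N → A, jointPmf σ b * u i b)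
              - (∑ b : Fin N → A, jointPmf ρ b * u i b) = _
          rw [← Finset.sum_sub_distrib]
          exact Finset.sum_congr rfl fun b _ => by ring
        rw [h1]
        have h2 : ∑ b : Fin N → A, (jointPmf σ b - jointPmf ρ b) * (u i b - 1/2)
            = ∑ b : Fin N → A, (jointPmf σ b - jointPmf ρ b) * u i b
              - (∑ b : Fin N → A, (jointPmf σ b - jointPmf ρ b)) * (1/2) := by
          rw [Finset.sum_mul, ← Finset.sum_sub_distrib]
          exact Finset.sum_congr rfl fun b _ => by ring
        rw [h2, h0]; ring
      have habs : |expVal σ (u i) - margU u π i a|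
          ≤ (∑ b : Fin N → A, wH b * |tP' b - tP b|) / 2 := by
        rw [hΔ]
        calc |∑ b : Fin N → A, (jointPmf σ b - jointPmf ρ b) * (u i b - 1/2)|
            ≤ ∑ b : Fin N → A, |(jointPmf σ b - jointPmf ρ b) * (u i b - 1/2)| :=
              Finset.abs_sum_le_sum_abs _ _
          _ ≤ ∑ b : Fin N → A, wH b * |tP' b - tP b| * (1/2) := by
              apply Finset.sum_le_sum
              intro b _
              rw [abs_mul]
              have hb1 : |jointPmf σ b - jointPmf ρ b| = wH b * |tP' b - tP b| := by
                rw [hfactσ b, hfactρ b,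
                    show tP' b * wH b - tP b * wH b = wH b * (tP' b - tP b) by ring,
                    abs_mul, abs_of_nonneg (hw_nn b)]
              have hb2 : |u i b - 1/2| ≤ 1/2 := by
                have := hu i b
                rw [abs_le]; constructor <;> linarith [this.1, this.2]
              rw [hb1]
              exact mul_le_mul_of_nonneg_left hb2
                (mul_nonneg (hw_nn b) (abs_nonneg _))
          _ = (∑ b : Fin N → A, wH b * |tP' b - tP b|) / 2 := by
              rw [← Finset.sum_mul]; ring
      calc |expVal σ (u i) - margU u π i a|
          ≤ (∑ b : Fin N → A, wH b * |tP' b - tP b|) / 2 := habs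
        _ ≤ Real.sqrt (2 * J) / 2 := by linarith
    calc |∑ a : A,
          (expVal (fun j => if j = i then pmfOf a else if j < i then π j else π' j)
              (u i) - margU u π i a) * (π' i a - π i a)|
        ≤ ∑ a : A,
          |(expVal (fun j => if j = i then pmfOf a else if j < i then π j else π' j)
              (u i) - margU u π i a)| * |π' i a - π i a| := by
          calc _ ≤ ∑ a : A,
              |(expVal (fun j => if j = i then pmfOf a else if j < i then π j else π' j)
                  (u i) - margU u π i a) * (π' i a - π i a)| :=
                Finset.abs_sum_le_sum_abs _ _
            _ = _ := Finset.sum_congr rfl fun a _ => abs_mul _ _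
      _ ≤ ∑ a : A, Real.sqrt (2 * J) / 2 * |π' i a - π i a| :=
          Finset.sum_le_sum fun a _ =>
            mul_le_mul_of_nonneg_right (hdiff a) (abs_nonneg _)
      _ = Real.sqrt (2 * J) / 2 * x i := by rw [hx, ← Finset.mul_sum]
  -- assemble
  have hXnn : 0 ≤ ∑ j, x j := Finset.sum_nonneg fun j _ => hxnn j
  have hXsq : (∑ j, x j) ^ 2 ≤ (N : ℝ) * (2 * J) := by
    have hc := Finset.sum_mul_sq_le_sq_mul_sq univ x (fun _ => (1 : ℝ))
    simp only [mul_one, one_pow] at hc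
    have hcard : ∑ _j : Fin N, (1 : ℝ) = (N : ℝ) := by simp
    rw [hcard] at hc
    have h2 : ∑ j, x j ^ 2 ≤ 2 * J := by
      calc ∑ j, x j ^ 2 ≤ ∑ j, 2 * Jdiv (π' j) (π j) :=
            Finset.sum_le_sum fun j _ => hxsq j
        _ = 2 * J := by rw [hJdecomp, Finset.mul_sum]
    calc (∑ j, x j) ^ 2 ≤ (∑ j, x j ^ 2) * (N : ℝ) := hc
      _ ≤ 2 * J * (N : ℝ) := by
          apply mul_le_mul_of_nonneg_right h2 (Nat.cast_nonneg N)
      _ = (N : ℝ) * (2 * J) := by ring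
  have hX : ∑ j, x j ≤ Real.sqrt N * Real.sqrt (2 * J) := by
    calc ∑ j, x j = Real.sqrt ((∑ j, x j) ^ 2) := (Real.sqrt_sq hXnn).symm
      _ ≤ Real.sqrt ((N : ℝ) * (2 * J)) := Real.sqrt_le_sqrt hXsq
      _ = Real.sqrt N * Real.sqrt (2 * J) := Real.sqrt_mul (Nat.cast_nonneg N) _
  calc ∑ i : Fin N,
        |∑ a : A,
          (expVal (fun j => if j = i then pmfOf a else if j < i then π j else π' j)
              (u i) - margU u π i a) * (π' i a - π i a)|
      ≤ ∑ i : Fin N, Real.sqrt (2 * J) / 2 * x i :=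
        Finset.sum_le_sum fun i _ => key i
    _ = Real.sqrt (2 * J) / 2 * ∑ j, x j := by rw [Finset.mul_sum]
    _ ≤ Real.sqrt (2 * J) / 2 * (Real.sqrt N * Real.sqrt (2 * J)) :=
        mul_le_mul_of_nonneg_left hX (by positivity)
    _ = Real.sqrt N * (Real.sqrt (2 * J) * Real.sqrt (2 * J)) / 2 := by ring
    _ = Real.sqrt N * (2 * J) / 2 := by
        rw [Real.mul_self_sqrt (by linarith)]
    _ = Real.sqrt N * J := by ring
end
end

section
/- For every positive integer n and all positive reals x_1, …, x_n, it holds that |∏_{i=1}^n x_i − 1 − Σ_{i=1}^n (x_i − 1)| ≤ (∏_{i=1}^n x_i − 1) · log(∏_{i=1}^n x_i) + Σ_{i=1}^n (x_i − 1) · log x_i. -/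
lemma key1 {y : ℝ} (hy : 0 < y) : 0 ≤ y - 1 - Real.log y := by
  have := Real.log_le_sub_one_of_pos hy
  linarith

lemma key2 {y : ℝ} (hy : 0 < y) : y - 1 - Real.log y ≤ (y - 1) * Real.log y := by
  have h := Real.log_le_sub_one_of_pos (show (0:ℝ) < 1/y by positivity)
  rw [Real.log_div one_ne_zero hy.ne', Real.log_one] at h
  -- h : -log y ≤ 1/y - 1
  have h2 : y * (1 - 1/y) ≤ y * Real.log y := by
    apply mul_le_mul_of_nonneg_left _ hy.le
    linarith
  have h3 : y * (1 - 1/y) = y - 1 := by field_simp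
  nlinarith [h2]

lemma key3 {y : ℝ} (hy : 0 < y) : 0 ≤ (y - 1) * Real.log y :=
  le_trans (key1 hy) (key2 hy)

/-- Elementary product-expansion inequality: for positive reals `x_1, …, x_n`,
`|∏ x_i − 1 − Σ (x_i − 1)| ≤ (∏ x_i − 1) log(∏ x_i) + Σ (x_i − 1) log x_i`. -/
theorem prod_expansion_bound (n : ℕ) (hn : 0 < n) (x : Fin n → ℝ)
    (hx : ∀ i, 0 < x i) :
    |(∏ i, x i) - 1 - ∑ i, (x i - 1)| ≤
      ((∏ i, x i) - 1) * Real.log (∏ i, x i) +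
        ∑ i, (x i - 1) * Real.log (x i) := by
  have hP : 0 < ∏ i, x i := Finset.prod_pos (fun i _ => hx i)
  have hlog : Real.log (∏ i, x i) = ∑ i, Real.log (x i) :=
    Real.log_prod (fun i _ => (hx i).ne')
  -- bounds on sum pieces
  have hBnn : 0 ≤ ∑ i, (x i - 1 - Real.log (x i)) :=
    Finset.sum_nonneg fun i _ => key1 (hx i)
  have hBub : ∑ i, (x i - 1 - Real.log (x i)) ≤ ∑ i, (x i - 1) * Real.log (x i) :=
    Finset.sum_le_sum fun i _ => key2 (hx i)
  have hSnn : 0 ≤ ∑ i, (x i - 1) * Real.log (x i) :=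
    Finset.sum_nonneg fun i _ => key3 (hx i)
  have hAnn : 0 ≤ (∏ i, x i) - 1 - Real.log (∏ i, x i) := key1 hP
  have hAub : (∏ i, x i) - 1 - Real.log (∏ i, x i) ≤
      ((∏ i, x i) - 1) * Real.log (∏ i, x i) := key2 hP
  have hsplit : (∏ i, x i) - 1 - ∑ i, (x i - 1) =
      ((∏ i, x i) - 1 - Real.log (∏ i, x i)) - ∑ i, (x i - 1 - Real.log (x i)) := by
    have h := Finset.sum_sub_distrib (s := Finset.univ)
      (f := fun i => x i - 1) (g := fun i => Real.log (x i))
    rw [hlog, h]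
    ring
  rw [hsplit, abs_sub_le_iff]
  constructor <;> linarith
end
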